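/- arXiv:2006.16000 — 5 statements merged into one kernel-verified Lean document; each statement's English description precedes it below -/
import Mathlib

section
/- If a subset A of Baire space ℕ^ℕ is Hurewicz, then for every continuous map f : A → ℕ^ℕ the image f[A] is bounded in the eventual-dominance order ≤*. -/
def HurewiczSet {X : Type*} [TopologicalSpace X] (A : Set X) : Prop :=
  ∀ U : ℕ → Set (Set X), (∀ n, ∀ s ∈ U n, IsOpen s) → (∀ n, A ⊆ ⋃₀ U n) →
    ∃ V : ℕ → Finset (Set X), (∀ n, ↑(V n) ⊆ U n) ∧
      ∀ x ∈ A, ∀ᶠ n in Filter.atTop, x ∈ ⋃₀ ((V n : Set (Set X)))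

theorem hurewicz_continuous_image_bounded (A : Set (ℕ → ℕ)) (h : HurewiczSet A)
    (f : ↥A → (ℕ → ℕ)) (hf : Continuous f) :
    ∃ g : ℕ → ℕ, ∀ a : ↥A, ∀ᶠ n in Filter.atTop, f a n ≤ g n := by
  classical
  -- the set of points of A where f · n ≤ k is open in A
  have hT : ∀ n k : ℕ, IsOpen {a : ↥A | f a n ≤ k} := by
    intro n k
    have hc : Continuous fun a : ↥A => f a n := (continuous_apply n).comp hf
    exact (isOpen_discrete {m : ℕ | m ≤ k}).preimage hc
  -- choose open sets in the ambient space
  have hO : ∀ n k : ℕ, ∃ O : Set (ℕ → ℕ), IsOpen O ∧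
      Subtype.val ⁻¹' O = {a : ↥A | f a n ≤ k} := by
    intro n k
    exact isOpen_induced_iff.mp (hT n k)
  choose O hOopen hOpre using hO
  set U : ℕ → Set (Set (ℕ → ℕ)) := fun n => Set.range (O n) with hU
  have hUopen : ∀ n, ∀ s ∈ U n, IsOpen s := by
    rintro n s ⟨k, rfl⟩; exact hOopen n k
  have hUcov : ∀ n, A ⊆ ⋃₀ U n := by
    intro n a ha
    refine ⟨O n (f ⟨a, ha⟩ n), ⟨f ⟨a, ha⟩ n, rfl⟩, ?_⟩
    have : (⟨a, ha⟩ : ↥A) ∈ Subtype.val ⁻¹' O n (f ⟨a, ha⟩ n) := by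
      rw [hOpre]; exact Nat.le_refl _
    exact this
  obtain ⟨V, hV1, hV2⟩ := h U hUopen hUcov
  -- for each s in V n, recover an index k
  have key : ∀ n, ∀ s ∈ V n, ∃ k, O n k = s := fun n s hs => hV1 n hs
  let kk : ℕ → Set (ℕ → ℕ) → ℕ := fun n s =>
    if hh : ∃ k, O n k = s then hh.choose else 0
  refine ⟨fun n => (V n).sup (kk n), fun a => ?_⟩
  filter_upwards [hV2 a.1 a.2] with n hn
  obtain ⟨s, hsV, has⟩ := hn
  obtain ⟨k, hk⟩ := key n s hsV
  have hex : ∃ k, O n k = s := ⟨k, hk⟩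
  have hkk : O n (kk n s) = s := by
    simp only [kk, dif_pos hex]
    exact hex.choose_spec
  have hmem : (a : ℕ → ℕ) ∈ O n (kk n s) := hkk.symm ▸ has
  have : a ∈ Subtype.val ⁻¹' O n (kk n s) := hmem
  rw [hOpre] at this
  calc f a n ≤ kk n s := this
    _ ≤ (V n).sup (kk n) := Finset.le_sup hsV
end

section
/- If Γ is a family of subsets of ℝ satisfying the Hurewicz Dichotomy — i.e., for every A ∈ Γ that is not σ-compact there is a compact set K ⊆ ℝ such that K ∩ A is homeomorphic to the irrationals ℕ^ℕ — then every Menger member of Γ is σ-compact. -/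
open Set

def MengerSet {X : Type*} [TopologicalSpace X] (A : Set X) : Prop :=
  ∀ U : ℕ → Set (Set X), (∀ n, ∀ s ∈ U n, IsOpen s) → (∀ n, A ⊆ ⋃₀ U n) →
    ∃ V : ℕ → Finset (Set X), (∀ n, ↑(V n) ⊆ U n) ∧
      A ⊆ ⋃ n, ⋃₀ ((V n : Set (Set X)))

def MengerSpace (X : Type*) [TopologicalSpace X] : Prop :=
  ∀ U : ℕ → Set (Set X), (∀ n, ∀ s ∈ U n, IsOpen s) → (∀ n, univ ⊆ ⋃₀ U n) →
    ∃ V : ℕ → Finset (Set X), (∀ n, ↑(V n) ⊆ U n) ∧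
      univ ⊆ ⋃ n, ⋃₀ ((V n : Set (Set X)))

lemma mengerSet_inter_closed {A C : Set ℝ} (hA : MengerSet A) (hC : IsClosed C) :
    MengerSet (C ∩ A) := by
  classical
  intro U hopen hcov
  obtain ⟨V, hV, hcov'⟩ := hA (fun n => U n ∪ {Cᶜ})
    (fun n s hs => by
      rcases hs with hs | hs
      · exact hopen n s hs
      · rw [mem_singleton_iff] at hs; rw [hs]; exact hC.isOpen_compl)
    (fun n x hx => by
      by_cases hxC : x ∈ C
      · obtain ⟨t, ht, hxt⟩ := hcov n ⟨hxC, hx⟩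
        exact ⟨t, Or.inl ht, hxt⟩
      · exact ⟨Cᶜ, Or.inr rfl, hxC⟩)
  refine ⟨fun n => (V n).filter (· ∈ U n), fun n t ht => ?_, fun x hx => ?_⟩
  · simp only [Finset.coe_filter, mem_setOf_eq] at ht
    exact ht.2
  · obtain ⟨_, ⟨n, rfl⟩, t, ht, hxt⟩ := hcov' hx.2
    rcases hV n ht with htU | htU
    · exact mem_iUnion.mpr ⟨n, t, by simp [Finset.mem_filter, Finset.mem_coe.mp ht, htU], hxt⟩
    · rw [mem_singleton_iff] at htU
      rw [htU] at hxt
      exact absurd hx.1 hxt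

lemma mengerSpace_of_mengerSet {A : Set ℝ} (hA : MengerSet A) : MengerSpace ↥A := by
  classical
  set e : Set ↥A → Set ℝ := fun s => ⋃₀ {t | IsOpen t ∧ Subtype.val ⁻¹' t = s} with he
  have heopen : ∀ s, IsOpen (e s) := fun s =>
    isOpen_sUnion (fun t ht => ht.1)
  have hepre : ∀ s : Set ↥A, IsOpen s → Subtype.val ⁻¹' (e s) = s := by
    intro s hs
    obtain ⟨t, ht, hts⟩ := isOpen_induced_iff.mp hs
    apply subset_antisymm
    · intro x hx
      obtain ⟨u, hu, hxu⟩ := hx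
      rw [← hu.2]; exact hxu
    · intro x hx
      exact ⟨t, ⟨ht, hts⟩, by rw [← hts] at hx; exact hx⟩
  intro U hopen hcov
  obtain ⟨V, hV, hcov'⟩ := hA (fun n => e '' U n)
    (fun n s hs => by obtain ⟨u, _, rfl⟩ := hs; exact heopen u)
    (fun n x hx => by
      obtain ⟨s, hs, hxs⟩ := hcov n (mem_univ (⟨x, hx⟩ : ↥A))
      refine ⟨e s, mem_image_of_mem _ hs, ?_⟩
      have hx2 : (⟨x, hx⟩ : ↥A) ∈ Subtype.val ⁻¹' (e s) := by
        rw [hepre s (hopen n s hs)]; exact hxs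
      obtain ⟨u, hu, hxu⟩ := hx2
      exact ⟨u, hu, hxu⟩)
  refine ⟨fun n => (V n).image (fun t => Subtype.val ⁻¹' t), fun n s hs => ?_, fun x _ => ?_⟩
  · simp only [Finset.coe_image, mem_image, Finset.mem_coe] at hs
    obtain ⟨t, ht, rfl⟩ := hs
    obtain ⟨u, hu, rfl⟩ := hV n ht
    rw [hepre u (hopen n u hu)]
    exact hu
  · obtain ⟨_, ⟨n, rfl⟩, t, ht, hxt⟩ := hcov' x.2
    exact mem_iUnion.mpr ⟨n, Subtype.val ⁻¹' t,
      Finset.mem_coe.mpr (Finset.mem_image_of_mem _ ht), hxt⟩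

lemma mengerSpace_of_homeomorph {X Y : Type*} [TopologicalSpace X] [TopologicalSpace Y]
    (h : X ≃ₜ Y) (hX : MengerSpace X) : MengerSpace Y := by
  classical
  intro U hopen hcov
  obtain ⟨V, hV, hcov'⟩ := hX (fun n => (fun s => h ⁻¹' s) '' U n)
    (fun n s hs => by
      obtain ⟨u, hu, rfl⟩ := hs
      exact (hopen n u hu).preimage h.continuous)
    (fun n x _ => by
      obtain ⟨s, hs, hxs⟩ := hcov n (mem_univ (h x))
      exact ⟨h ⁻¹' s, mem_image_of_mem _ hs, hxs⟩)
  refine ⟨fun n => (V n).image (fun s => h.symm ⁻¹' s), fun n s hs => ?_, fun y _ => ?_⟩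
  · simp only [Finset.coe_image, mem_image, Finset.mem_coe] at hs
    obtain ⟨t, ht, rfl⟩ := hs
    obtain ⟨u, hu, rfl⟩ := hV n ht
    have : h.symm ⁻¹' (h ⁻¹' u) = u := by
      ext z; simp
    rw [this]; exact hu
  · obtain ⟨_, ⟨n, rfl⟩, t, ht, hxt⟩ := hcov' (mem_univ (h.symm y))
    refine mem_iUnion.mpr ⟨n, h.symm ⁻¹' t,
      Finset.mem_coe.mpr (Finset.mem_image_of_mem _ ht), hxt⟩

lemma not_mengerSpace_baire : ¬ MengerSpace (ℕ → ℕ) := by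
  classical
  intro hM
  obtain ⟨V, hV, hcov⟩ := hM (fun n => {t | ∃ k, t = {f : ℕ → ℕ | f n ≤ k}})
    (fun n s hs => by
      obtain ⟨k, rfl⟩ := hs
      have : {f : ℕ → ℕ | f n ≤ k} = (fun f : ℕ → ℕ => f n) ⁻¹' {j | j ≤ k} := rfl
      rw [this]
      exact (isOpen_discrete _).preimage (continuous_apply n))
    (fun n f _ => ⟨{g : ℕ → ℕ | g n ≤ f n}, ⟨f n, rfl⟩, by exact le_refl (f n)⟩)
  set K : ℕ → ℕ := fun n => (V n).sup (fun t => sInf {k | t ⊆ {f : ℕ → ℕ | f n ≤ k}}) with hK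
  have hbound : ∀ n, ∀ t ∈ V n, t ⊆ {f : ℕ → ℕ | f n ≤ K n} := by
    intro n t ht
    obtain ⟨k, rfl⟩ := hV n ht
    have hne : {k' | {f : ℕ → ℕ | f n ≤ k} ⊆ {f : ℕ → ℕ | f n ≤ k'}}.Nonempty :=
      ⟨k, fun f hf => hf⟩
    have hmem := Nat.sInf_mem hne
    refine hmem.trans (fun f hf => ?_)
    calc f n ≤ sInf {k' | {f : ℕ → ℕ | f n ≤ k} ⊆ {f : ℕ → ℕ | f n ≤ k'}} := hf
    _ ≤ K n := Finset.le_sup (f := fun t => sInf {k' | t ⊆ {f : ℕ → ℕ | f n ≤ k'}}) ht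
  have := hcov (mem_univ (fun n => K n + 1))
  obtain ⟨_, ⟨n, rfl⟩, t, ht, hxt⟩ := this
  have h3 := hbound n t ht hxt
  simp only [mem_setOf_eq] at h3
  omega

theorem hurewicz_dichotomy_implies_menger_conjecture (Γ : Set (Set ℝ))
    (hHD : ∀ A ∈ Γ, ¬ IsSigmaCompact A →
      ∃ K : Set ℝ, IsCompact K ∧ Nonempty (↥(K ∩ A) ≃ₜ (ℕ → ℕ))) :
    ∀ A ∈ Γ, MengerSet A → IsSigmaCompact A := by
  intro A hAΓ hAM
  by_contra hns
  obtain ⟨K, hK, ⟨e⟩⟩ := hHD A hAΓ hns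
  have h1 : MengerSet (K ∩ A) := mengerSet_inter_closed hAM hK.isClosed
  have h2 : MengerSpace ↥(K ∩ A) := mengerSpace_of_mengerSet h1
  exact not_mengerSpace_baire (mengerSpace_of_homeomorph e h2)
end

section
/- A separable metrizable space B is completely Baire if and only if B contains no closed subspace homeomorphic to the rationals ℚ. -/
open Metric Set Function

namespace HurewiczAux

/-- Tail sets in the tree `List ℕ` (children prepend). -/
def Tail (s : List ℕ) (m : ℕ) : Set (List ℕ) := {t | t = s ∨ ∃ k, m ≤ k ∧ (k :: s) <:+ t}

lemma self_mem_Tail (s : List ℕ) (m : ℕ) : s ∈ Tail s m := Or.inl rfl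

variable {α : Type*} [MetricSpace α] {β : Type*} [MetricSpace β]

structure GoodScheme (x : List ℕ → α) : Prop where
  inj : Function.Injective x
  sep : ∀ s m, ∃ ε > 0, ∀ t, dist (x t) (x s) < ε → t ∈ Tail s m
  conv : ∀ s, ∀ ε > 0, ∃ m, ∀ t ∈ Tail s m, dist (x t) (x s) < ε

lemma GoodScheme.continuous_canonical {x : List ℕ → α} {y : List ℕ → β}
    (hx : GoodScheme x) (hy : GoodScheme y) :
    Continuous fun p : Set.range x =>
      (Equiv.ofInjective y hy.inj ((Equiv.ofInjective x hx.inj).symm p) : Set.range y) := by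
  rw [Metric.continuous_iff]
  intro b ε hε
  set s := (Equiv.ofInjective x hx.inj).symm b with hs
  obtain ⟨m, hm⟩ := hy.conv s ε hε
  obtain ⟨δ, hδ, hδ'⟩ := hx.sep s m
  refine ⟨δ, hδ, fun a ha => ?_⟩
  set t := (Equiv.ofInjective x hx.inj).symm a with ht
  have hav : (a : α) = x t := by
    have h1 : a = Equiv.ofInjective x hx.inj t := ((Equiv.ofInjective x hx.inj).apply_symm_apply a).symm
    rw [h1]; rfl
  have hbv : (b : α) = x s := by
    have h1 : b = Equiv.ofInjective x hx.inj s := ((Equiv.ofInjective x hx.inj).apply_symm_apply b).symm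
    rw [h1]; rfl
  have : dist (x t) (x s) < δ := by
    rw [← hav, ← hbv]; exact ha
  have htm := hδ' t this
  have := hm t htm
  simpa [Subtype.dist_eq] using this

/-- Two good schemes have homeomorphic ranges. -/
noncomputable def GoodScheme.homeomorph {x : List ℕ → α} {y : List ℕ → β}
    (hx : GoodScheme x) (hy : GoodScheme y) : Set.range x ≃ₜ Set.range y where
  toEquiv := (Equiv.ofInjective x hx.inj).symm.trans (Equiv.ofInjective y hy.inj)
  continuous_toFun := hx.continuous_canonical hy
  continuous_invFun := hy.continuous_canonical hx


noncomputable section RatSide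

/-- A fixed surjective enumeration of `ℚ`. -/
def renum : ℕ → ℚ := (exists_surjective_nat ℚ).choose

lemma renum_surj : Function.Surjective renum := (exists_surjective_nat ℚ).choose_spec

def hasRat (I : Set ℝ) : Prop := ∃ n, ((renum n : ℚ) : ℝ) ∈ I

open Classical in
def ncI (I : Set ℝ) : ℕ := if h : hasRat I then Nat.find h else 0

def center (I : Set ℝ) : ℚ := renum (ncI I)

lemma center_mem {I : Set ℝ} (h : hasRat I) : ((center I : ℚ) : ℝ) ∈ I := by
  classical
  rw [center, ncI, dif_pos h]
  exact Nat.find_spec h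

lemma ncI_le {I : Set ℝ} (h : hasRat I) {n : ℕ} (hn : ((renum n : ℚ) : ℝ) ∈ I) :
    ncI I ≤ n := by
  classical
  rw [ncI, dif_pos h]
  exact Nat.find_le hn

open Classical in
def rad (I : Set ℝ) : ℝ :=
  if h : ∃ ε > 0, ball ((center I : ℚ) : ℝ) ε ⊆ I then h.choose else 1

lemma rad_pos (I : Set ℝ) : 0 < rad I := by
  classical
  rw [rad]
  split_ifs with h
  · exact h.choose_spec.1
  · norm_num

lemma ball_rad_subset {I : Set ℝ} (ho : IsOpen I) (h : hasRat I) :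
    ball ((center I : ℚ) : ℝ) (rad I) ⊆ I := by
  classical
  have hex : ∃ ε > 0, ball ((center I : ℚ) : ℝ) ε ⊆ I :=
    Metric.isOpen_iff.1 ho _ (center_mem h)
  rw [rad, dif_pos hex]
  exact hex.choose_spec.2

lemma rad_div_lt (I : Set ℝ) {j j' : ℕ} (h : j < j') : rad I / 2 ^ j' < rad I / 2 ^ j :=
  div_lt_div_of_pos_left (rad_pos I) (by positivity)
    (by exact pow_lt_pow_right₀ one_lt_two h)

lemma ult_aux (I : Set ℝ) (j : ℕ) :
    ((center I : ℚ) : ℝ) + rad I / 2 ^ (j + 1) < ((center I : ℚ) : ℝ) + rad I / 2 ^ j := by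
  have := rad_div_lt I (show j < j + 1 by omega); linarith

lemma vlt_aux (I : Set ℝ) (j : ℕ) :
    ((center I : ℚ) : ℝ) - rad I / 2 ^ j < ((center I : ℚ) : ℝ) - rad I / 2 ^ (j + 1) := by
  have := rad_div_lt I (show j < j + 1 by omega); linarith

def useq (I : Set ℝ) (j : ℕ) : ℝ := (exists_irrational_btwn (ult_aux I j)).choose

lemma useq_spec (I : Set ℝ) (j : ℕ) :
    Irrational (useq I j) ∧ ((center I : ℚ) : ℝ) + rad I / 2 ^ (j + 1) < useq I j ∧
      useq I j < ((center I : ℚ) : ℝ) + rad I / 2 ^ j :=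
  (exists_irrational_btwn (ult_aux I j)).choose_spec

def vseq (I : Set ℝ) (j : ℕ) : ℝ := (exists_irrational_btwn (vlt_aux I j)).choose

lemma vseq_spec (I : Set ℝ) (j : ℕ) :
    Irrational (vseq I j) ∧ ((center I : ℚ) : ℝ) - rad I / 2 ^ j < vseq I j ∧
      vseq I j < ((center I : ℚ) : ℝ) - rad I / 2 ^ (j + 1) :=
  (exists_irrational_btwn (vlt_aux I j)).choose_spec

/-- The `k`-th child interval. -/
def child (I : Set ℝ) (k : ℕ) : Set ℝ :=
  if k % 2 = 0 then
    (if k = 0 then I ∩ Ioi (useq I 1) else Ioo (useq I (k / 2 + 1)) (useq I (k / 2)))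
  else
    (if k = 1 then I ∩ Iio (vseq I 1) else Ioo (vseq I (k / 2)) (vseq I (k / 2 + 1)))

def Inv (I : Set ℝ) : Prop := IsOpen I ∧ I.OrdConnected ∧ hasRat I

lemma useq_gt (I : Set ℝ) (j : ℕ) : ((center I : ℚ) : ℝ) < useq I j := by
  have h := (useq_spec I j).2.1
  have : (0:ℝ) < rad I / 2 ^ (j+1) := by have := rad_pos I; positivity
  linarith

lemma vseq_lt (I : Set ℝ) (j : ℕ) : vseq I j < ((center I : ℚ) : ℝ) := by
  have h := (vseq_spec I j).2.2
  have : (0:ℝ) < rad I / 2 ^ (j+1) := by have := rad_pos I; positivity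
  linarith

lemma useq_anti (I : Set ℝ) : StrictAnti (useq I) := by
  apply strictAnti_nat_of_succ_lt
  intro j
  have h1 := (useq_spec I (j+1)).2.2
  have h2 := (useq_spec I j).2.1
  linarith

lemma vseq_mono (I : Set ℝ) : StrictMono (vseq I) := by
  apply strictMono_nat_of_lt_succ
  intro j
  have h1 := (vseq_spec I j).2.2
  have h2 := (vseq_spec I (j+1)).2.1
  linarith

/-- Even children lie strictly above the center, odd children strictly below. -/
lemma child_side {I : Set ℝ} {k : ℕ} {x : ℝ} (hx : x ∈ child I k) :
    (k % 2 = 0 ∧ ((center I : ℚ) : ℝ) < x) ∨ (k % 2 = 1 ∧ x < ((center I : ℚ) : ℝ)) := by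
  rw [child] at hx
  split_ifs at hx with hpar h0 h1
  · exact Or.inl ⟨hpar, lt_trans (useq_gt I 1) hx.2⟩
  · exact Or.inl ⟨hpar, lt_trans (useq_gt I (k / 2 + 1)) hx.1⟩
  · exact Or.inr ⟨Nat.mod_two_ne_zero.mp hpar, lt_trans hx.2 (vseq_lt I 1)⟩
  · exact Or.inr ⟨Nat.mod_two_ne_zero.mp hpar, lt_trans hx.2 (vseq_lt I (k / 2 + 1))⟩

lemma child_subset {I : Set ℝ} (hI : Inv I) (k : ℕ) :
    child I k ⊆ I \ {((center I : ℚ) : ℝ)} := by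
  obtain ⟨ho, hc, hr⟩ := hI
  have hball := ball_rad_subset ho hr
  have hrp := rad_pos I
  set c : ℝ := ((center I : ℚ) : ℝ) with hcdef
  intro x hx
  have hside := child_side hx
  have hne : x ≠ c := by
    rcases hside with ⟨_, h⟩ | ⟨_, h⟩ <;> exact fun he => by rw [he] at h; exact lt_irrefl _ h
  refine ⟨?_, hne⟩
  rw [child] at hx
  split_ifs at hx with hpar h0 h1
  · exact hx.1
  · -- Ioo (useq (k/2+1)) (useq (k/2)) ⊆ ball c rad ⊆ I
    apply hball
    have hu1 := useq_gt I (k / 2 + 1)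
    have hu2 := (useq_spec I (k / 2)).2.2
    have hd : rad I / 2 ^ (k / 2) ≤ rad I := by
      calc rad I / 2 ^ (k / 2) ≤ rad I / 2 ^ 0 := by
            rcases Nat.eq_zero_or_pos (k / 2) with h | h
            · rw [h]
            · exact le_of_lt (rad_div_lt I h)
        _ = rad I := by norm_num
    rw [mem_ball, Real.dist_eq, abs_lt]
    constructor <;> nlinarith [hx.1, hx.2]
  · exact hx.1
  · apply hball
    have hv1 := vseq_lt I (k / 2 + 1)
    have hv2 := (vseq_spec I (k / 2)).2.1
    have hd : rad I / 2 ^ (k / 2) ≤ rad I := by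
      calc rad I / 2 ^ (k / 2) ≤ rad I / 2 ^ 0 := by
            rcases Nat.eq_zero_or_pos (k / 2) with h | h
            · rw [h]
            · exact le_of_lt (rad_div_lt I h)
        _ = rad I := by norm_num
    rw [mem_ball, Real.dist_eq, abs_lt]
    constructor <;> nlinarith [hx.1, hx.2]

/-- Points of any child are at distance at least `rad I / 2 ^ (k + 2)` from the center. -/
lemma child_far {I : Set ℝ} {k : ℕ} {x : ℝ} (hx : x ∈ child I k) :
    rad I / 2 ^ (k + 2) ≤ dist x ((center I : ℚ) : ℝ) := by
  have hrp := rad_pos I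
  set c : ℝ := ((center I : ℚ) : ℝ)
  have key : rad I / 2 ^ (k / 2 + 2) ≤ dist x c := by
    rw [child] at hx
    rw [Real.dist_eq]
    split_ifs at hx with hpar h0 h1
    · have hu := (useq_spec I 1).2.1
      have : c + rad I / 2 ^ 2 < x := by
        have := hx.2
        simp only [mem_Ioi] at this
        linarith
      rw [abs_of_pos (by linarith [show (0:ℝ) < rad I / 2 ^ 2 by positivity])]
      have : (k : ℕ) = 0 := h0
      subst this
      norm_num at *
      linarith
    · have hu := (useq_spec I (k / 2 + 1)).2.1
      have hxlb : c + rad I / 2 ^ (k / 2 + 2) < x := lt_trans hu hx.1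
      rw [abs_of_pos (by linarith [show (0:ℝ) < rad I / 2 ^ (k/2 + 2) by positivity])]
      linarith
    · have hv := (vseq_spec I 1).2.2
      have hxub : x < c - rad I / 2 ^ 2 := by
        have := hx.2
        simp only [mem_Iio] at this
        linarith
      rw [abs_of_neg (by linarith [show (0:ℝ) < rad I / 2 ^ 2 by positivity])]
      have : (k : ℕ) = 1 := h1
      subst this
      norm_num at *
      linarith
    · have hv := (vseq_spec I (k / 2 + 1)).2.2
      have hxub : x < c - rad I / 2 ^ (k / 2 + 2) := lt_trans hx.2 hv
      rw [abs_of_neg (by linarith [show (0:ℝ) < rad I / 2 ^ (k/2+2) by positivity])]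
      linarith
  refine le_trans ?_ key
  have : k / 2 + 2 ≤ k + 2 := by omega
  rcases lt_or_eq_of_le this with h | h
  · exact le_of_lt (rad_div_lt I h)
  · rw [h]

/-- For `k ≥ 2`, points of the `k`-th child are within `rad I / 2 ^ (k / 2)` of the center. -/
lemma child_close {I : Set ℝ} {k : ℕ} (hk : 2 ≤ k) {x : ℝ} (hx : x ∈ child I k) :
    dist x ((center I : ℚ) : ℝ) ≤ rad I / 2 ^ (k / 2) := by
  have hrp := rad_pos I
  set c : ℝ := ((center I : ℚ) : ℝ)
  rw [child] at hx
  rw [Real.dist_eq]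
  split_ifs at hx with hpar h0 h1
  · omega
  · have hu1 := useq_gt I (k / 2 + 1)
    have hu2 := (useq_spec I (k / 2)).2.2
    rw [abs_of_pos (by linarith [hx.1, hx.2])]
    linarith [hx.1, hx.2]
  · omega
  · have hv1 := vseq_lt I (k / 2 + 1)
    have hv2 := (vseq_spec I (k / 2)).2.1
    rw [abs_of_neg (by linarith [hx.1, hx.2])]
    linarith [hx.1, hx.2]

/-- Distinct children are disjoint. -/
lemma child_disjoint (I : Set ℝ) {k k' : ℕ} (h : k ≠ k') :
    Disjoint (child I k) (child I k') := by
  rw [Set.disjoint_left]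
  intro x hx hx'
  -- same parity or different parity
  rcases child_side hx with ⟨hp, hgt⟩ | ⟨hp, hlt⟩ <;>
    rcases child_side hx' with ⟨hp', hgt'⟩ | ⟨hp', hlt'⟩
  · -- both even : use useq ordering
    -- wlog k < k'
    have key : ∀ a b : ℕ, a % 2 = 0 → b % 2 = 0 → a < b → ∀ y : ℝ,
        y ∈ child I a → y ∈ child I b → False := by
      intro a b hae hbe hab y hya hyb
      -- y ∈ child a ⇒ y > useq (a/2+1); y ∈ child b ⇒ y < useq (b/2) and a/2+1 ≤ b/2
      have hya' : useq I (a / 2 + 1) < y := by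
        rw [child, if_pos hae] at hya
        split_ifs at hya with h0
        · subst h0; simpa using hya.2
        · exact hya.1
      have hyb' : y < useq I (b / 2) := by
        rw [child, if_pos hbe] at hyb
        split_ifs at hyb with h0
        · omega
        · exact hyb.2
      have hle : useq I (b / 2) ≤ useq I (a / 2 + 1) := by
        apply (useq_anti I).antitone
        omega
      linarith
    rcases lt_or_gt_of_ne h with hlt2 | hlt2
    · exact key k k' hp hp' hlt2 x hx hx'
    · exact key k' k hp' hp hlt2 x hx' hx
  · linarith
  · linarith
  · have key : ∀ a b : ℕ, a % 2 = 1 → b % 2 = 1 → a < b → ∀ y : ℝ,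
        y ∈ child I a → y ∈ child I b → False := by
      intro a b hae hbe hab y hya hyb
      have hya' : y < vseq I (a / 2 + 1) := by
        rw [child, if_neg (by omega)] at hya
        split_ifs at hya with h0
        · subst h0; simpa using hya.2
        · exact hya.2
      have hyb' : vseq I (b / 2) < y := by
        rw [child, if_neg (by omega)] at hyb
        split_ifs at hyb with h0
        · omega
        · exact hyb.1
      have hle : vseq I (a / 2 + 1) ≤ vseq I (b / 2) := by
        apply (vseq_mono I).monotone
        omega
      linarith
    rcases lt_or_gt_of_ne h with hlt2 | hlt2
    · exact key k k' hp hp' hlt2 x hx hx'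
    · exact key k' k hp' hp hlt2 x hx' hx

lemma rad_div_le_self (I : Set ℝ) (j : ℕ) : rad I / 2 ^ j ≤ rad I :=
  div_le_self (rad_pos I).le (one_le_pow₀ one_le_two)

lemma exists_rad_div_lt (I : Set ℝ) {d : ℝ} (hd : 0 < d) : ∃ j : ℕ, rad I / 2 ^ j < d := by
  obtain ⟨n, hn⟩ := exists_pow_lt_of_lt_one (div_pos hd (rad_pos I)) one_half_lt_one
  refine ⟨n, ?_⟩
  have h1 : rad I / 2 ^ n = rad I * ((1:ℝ)/2) ^ n := by
    rw [div_pow, one_pow]; ring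
  rw [h1]
  calc rad I * ((1:ℝ)/2) ^ n < rad I * (d / rad I) :=
        mul_lt_mul_of_pos_left hn (rad_pos I)
    _ = d := by
        rw [mul_comm, div_mul_eq_mul_div, mul_div_assoc, div_self (ne_of_gt (rad_pos I)), mul_one]

/-- Tiling: every rational of `I` other than the center lies in some child. -/
lemma child_tiling {I : Set ℝ} (hI : Inv I) {q : ℚ} (hq : (q : ℝ) ∈ I)
    (hne : q ≠ center I) : ∃ k, (q : ℝ) ∈ child I k := by
  classical
  obtain ⟨ho, hoc, hr⟩ := hI
  have hrp := rad_pos I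
  set c : ℝ := ((center I : ℚ) : ℝ) with hc
  set x : ℝ := (q : ℝ) with hxq
  have hxc : x ≠ c := Rat.cast_injective.ne hne
  have hxv : ∀ j, x ≠ vseq I j := fun j he => (vseq_spec I j).1 ⟨q, he⟩
  have hxu : ∀ j, x ≠ useq I j := fun j he => (useq_spec I j).1 ⟨q, he⟩
  rcases lt_or_gt_of_ne hxc with hlt | hgt
  · -- below the center: odd children
    by_cases h1 : x < vseq I 1
    · refine ⟨1, ?_⟩
      rw [child]
      norm_num
      exact ⟨hq, h1⟩
    · push_neg at h1
      have h1' : vseq I 1 < x := lt_of_le_of_ne h1 (fun he => hxv 1 he.symm)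
      have hex : ∃ j : ℕ, x < vseq I j := by
        obtain ⟨j, hj⟩ := exists_rad_div_lt I (show (0:ℝ) < c - x by linarith)
        exact ⟨j, by linarith [(vseq_spec I j).2.1]⟩
      set j0 := Nat.find hex with hj0def
      have hj0 : x < vseq I j0 := Nat.find_spec hex
      have hj02 : 2 ≤ j0 := by
        by_contra hcon
        have hle : vseq I j0 ≤ vseq I 1 := (vseq_mono I).monotone (by omega)
        linarith
      have hj0m : vseq I (j0 - 1) < x := by
        have := Nat.find_min hex (show j0 - 1 < j0 by omega)
        push_neg at this
        exact lt_of_le_of_ne this (hxv (j0 - 1)).symm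
      refine ⟨2 * (j0 - 1) + 1, ?_⟩
      rw [child, if_neg (by omega), if_neg (by omega)]
      have hdiv : (2 * (j0 - 1) + 1) / 2 = j0 - 1 := by omega
      rw [hdiv]
      have : j0 - 1 + 1 = j0 := by omega
      rw [this]
      exact ⟨hj0m, hj0⟩
  · -- above the center: even children
    by_cases h1 : useq I 1 < x
    · exact ⟨0, by rw [child]; norm_num; exact ⟨hq, h1⟩⟩
    · push_neg at h1
      have h1' : x < useq I 1 := lt_of_le_of_ne h1 (hxu 1)
      have hex : ∃ j : ℕ, useq I j < x := by
        obtain ⟨j, hj⟩ := exists_rad_div_lt I (show (0:ℝ) < x - c by linarith)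
        exact ⟨j, by linarith [(useq_spec I j).2.2]⟩
      set j0 := Nat.find hex with hj0def
      have hj0 : useq I j0 < x := Nat.find_spec hex
      have hj02 : 2 ≤ j0 := by
        by_contra hcon
        have hle : useq I 1 ≤ useq I j0 := (useq_anti I).antitone (by omega)
        linarith
      have hj0m : x < useq I (j0 - 1) := by
        have := Nat.find_min hex (show j0 - 1 < j0 by omega)
        push_neg at this
        exact lt_of_le_of_ne this (hxu (j0 - 1))
      refine ⟨2 * (j0 - 1), ?_⟩
      rw [child, if_pos (by omega), if_neg (by omega)]
      have hdiv : (2 * (j0 - 1)) / 2 = j0 - 1 := by omega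
      rw [hdiv]
      have : j0 - 1 + 1 = j0 := by omega
      rw [this]
      exact ⟨hj0, hj0m⟩

/-- Children of an invariant interval are invariant. -/
lemma child_inv {I : Set ℝ} (hI : Inv I) (k : ℕ) : Inv (child I k) := by
  obtain ⟨ho, hoc, hr⟩ := hI
  have hrp := rad_pos I
  set c : ℝ := ((center I : ℚ) : ℝ) with hc
  have hball := ball_rad_subset ho hr
  constructor
  · rw [child]
    split_ifs <;> first
      | exact (ho.inter isOpen_Ioi)
      | exact (ho.inter isOpen_Iio)
      | exact isOpen_Ioo
  constructor
  · rw [child]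
    split_ifs
    · exact hoc.inter Set.ordConnected_Ioi
    · exact Set.ordConnected_Ioo
    · exact hoc.inter Set.ordConnected_Iio
    · exact Set.ordConnected_Ioo
  · -- contains a rational
    rw [child]
    split_ifs with hpar h0 h1
    · -- I ∩ Ioi (useq 1) ⊇ Ioo (useq 1) (c + rad I / 2)
      have hu1 := (useq_spec I 1).2.2
      have hlt : useq I 1 < c + rad I / 2 ^ 1 := hu1
      obtain ⟨q', hq1, hq2⟩ := exists_rat_btwn hlt
      refine ⟨(renum_surj q').choose, ?_⟩
      rw [(renum_surj q').choose_spec]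
      refine ⟨hball ?_, hq1⟩
      rw [mem_ball, Real.dist_eq, abs_lt]
      have hc1 : c < useq I 1 := useq_gt I 1
      constructor
      · nlinarith
      · have : rad I / 2 ^ 1 ≤ rad I := rad_div_le_self I 1
        nlinarith
    · obtain ⟨q', hq1, hq2⟩ := exists_rat_btwn (useq_anti I (show k/2 < k/2+1 by omega))
      exact ⟨(renum_surj q').choose, by rw [(renum_surj q').choose_spec]; exact ⟨hq1, hq2⟩⟩
    · have hv1 := (vseq_spec I 1).2.1
      have hlt : c - rad I / 2 ^ 1 < vseq I 1 := hv1
      obtain ⟨q', hq1, hq2⟩ := exists_rat_btwn hlt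
      refine ⟨(renum_surj q').choose, ?_⟩
      rw [(renum_surj q').choose_spec]
      refine ⟨hball ?_, hq2⟩
      rw [mem_ball, Real.dist_eq, abs_lt]
      have hc1 : vseq I 1 < c := vseq_lt I 1
      constructor
      · have : rad I / 2 ^ 1 ≤ rad I := rad_div_le_self I 1
        nlinarith
      · nlinarith
    · obtain ⟨q', hq1, hq2⟩ := exists_rat_btwn (vseq_mono I (show k/2 < k/2+1 by omega))
      exact ⟨(renum_surj q').choose, by rw [(renum_surj q').choose_spec]; exact ⟨hq1, hq2⟩⟩

def Iv : List ℕ → Set ℝ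
  | [] => Set.univ
  | k :: s => child (Iv s) k

lemma Iv_inv (s : List ℕ) : Inv (Iv s) := by
  induction s with
  | nil => exact ⟨isOpen_univ, Set.ordConnected_univ, ⟨0, Set.mem_univ _⟩⟩
  | cons k s ih => exact child_inv ih k

def xQ (s : List ℕ) : ℚ := center (Iv s)

lemma Iv_child_subset (s : List ℕ) (k : ℕ) : Iv (k :: s) ⊆ Iv s \ {((xQ s : ℚ) : ℝ)} :=
  child_subset (Iv_inv s) k

lemma xQ_mem (s : List ℕ) : ((xQ s : ℚ) : ℝ) ∈ Iv s := center_mem (Iv_inv s).2.2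

lemma Iv_suffix_subset {s t : List ℕ} (h : s <:+ t) : Iv t ⊆ Iv s := by
  obtain ⟨u, rfl⟩ := h
  induction u with
  | nil => simp
  | cons a u' ih =>
    refine subset_trans ?_ ih
    exact fun x hx => ((Iv_child_subset (u' ++ s) a) hx).1

lemma suffix_cases {r t : List ℕ} (h : r <:+ t) : t = r ∨ ∃ j u, t = u ++ j :: r := by
  obtain ⟨w, rfl⟩ := h
  rcases w.eq_nil_or_concat' with hw | ⟨L, b, rfl⟩
  · subst hw; exact Or.inl rfl
  · exact Or.inr ⟨b, L, by simp⟩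

lemma Iv_disjoint : ∀ s t : List ℕ, ¬ s <:+ t → ¬ t <:+ s → Disjoint (Iv s) (Iv t) := by
  intro s
  induction s with
  | nil => intro t h _; exact absurd List.nil_suffix h
  | cons i r ih =>
    intro t h1 h2
    by_cases hrt : r <:+ t
    · rcases suffix_cases hrt with rfl | ⟨j, u, rfl⟩
      · exact absurd (List.suffix_cons i t) h2
      · by_cases hji : j = i
        · subst hji
          exact absurd ⟨u, rfl⟩ h1
        · have hsub : Iv (u ++ j :: r) ⊆ child (Iv r) j := Iv_suffix_subset ⟨u, rfl⟩
          exact Disjoint.mono_right hsub (child_disjoint (Iv r) (Ne.symm hji))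
    · have h2' : ¬ t <:+ r := fun hc => h2 (hc.trans (List.suffix_cons i r))
      exact Disjoint.mono_left (fun x hx => ((Iv_child_subset r i) hx).1) (ih t hrt h2')

open Classical in
def qidx (q : ℚ) : ℕ := Nat.find (renum_surj q)

lemma renum_qidx (q : ℚ) : renum (qidx q) = q := by
  classical
  exact Nat.find_spec (renum_surj q)

lemma ncI_le_qidx {I : Set ℝ} (h : hasRat I) {q : ℚ} (hq : (q : ℝ) ∈ I) : ncI I ≤ qidx q :=
  ncI_le h (by rw [renum_qidx]; exact hq)

lemma ncI_child_gt {I : Set ℝ} (hI : Inv I) (k : ℕ) (hc : hasRat (child I k)) :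
    ncI I < ncI (child I k) := by
  have hsub := child_subset hI k
  have hmem : ((center (child I k) : ℚ) : ℝ) ∈ child I k := center_mem hc
  have hle : ncI I ≤ ncI (child I k) := ncI_le hI.2.2 ((hsub hmem).1)
  rcases lt_or_eq_of_le hle with h | h
  · exact h
  · exfalso
    have : center I = center (child I k) := by rw [center, center, h]
    rw [← this] at hmem
    exact (hsub hmem).2 rfl

lemma Iv_reach : ∀ d : ℕ, ∀ s : List ℕ, ∀ q : ℚ, (q : ℝ) ∈ Iv s →
    qidx q - ncI (Iv s) ≤ d → ∃ t, s <:+ t ∧ xQ t = q := by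
  intro d
  induction d with
  | zero =>
    intro s q hq hd
    have hle : ncI (Iv s) ≤ qidx q := ncI_le_qidx (Iv_inv s).2.2 hq
    have heq : ncI (Iv s) = qidx q := by omega
    refine ⟨s, List.suffix_rfl, ?_⟩
    rw [xQ, center, heq, renum_qidx]
  | succ d ihd =>
    intro s q hq hd
    by_cases hne : q = center (Iv s)
    · exact ⟨s, List.suffix_rfl, hne.symm⟩
    · obtain ⟨k, hk⟩ := child_tiling (Iv_inv s) hq hne
      have hinv' := Iv_inv (k :: s)
      have h1 : ncI (Iv s) < ncI (Iv (k :: s)) := ncI_child_gt (Iv_inv s) k hinv'.2.2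
      have h2 : ncI (Iv (k :: s)) ≤ qidx q := ncI_le_qidx hinv'.2.2 hk
      obtain ⟨t, hts, hxq⟩ := ihd (k :: s) q hk (by omega)
      exact ⟨t, (List.suffix_cons k s).trans hts, hxq⟩

lemma xQ_surj : ∀ q : ℚ, ∃ t, xQ t = q := by
  intro q
  obtain ⟨t, _, ht⟩ := Iv_reach (qidx q) [] q (by simp [Iv]) (by omega)
  exact ⟨t, ht⟩

lemma suffix_eq_of_length {l1 l2 t : List ℕ} (h1 : l1 <:+ t) (h2 : l2 <:+ t)
    (hl : l1.length = l2.length) : l1 = l2 := by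
  obtain ⟨a, ha⟩ := h1
  obtain ⟨b, rfl⟩ := h2
  have hlen : a.length = b.length := by
    have := congrArg List.length ha
    simp at this ⊢
    omega
  exact (List.append_inj ha hlen).2

lemma xQ_sep (s : List ℕ) (m : ℕ) :
    ∃ ε > 0, ∀ t, dist (xQ t) (xQ s) < ε → t ∈ Tail s m := by
  have hrp := rad_pos (Iv s)
  refine ⟨rad (Iv s) / 2 ^ (m + 2), by positivity, fun t ht => ?_⟩
  have hdist : dist ((xQ t : ℚ) : ℝ) ((xQ s : ℚ) : ℝ) < rad (Iv s) / 2 ^ (m + 2) := by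
    rw [Rat.dist_cast]; exact ht
  have hmem : ((xQ t : ℚ) : ℝ) ∈ Iv s := by
    apply ball_rad_subset (Iv_inv s).1 (Iv_inv s).2.2
    rw [mem_ball]
    exact lt_of_lt_of_le hdist (rad_div_le_self _ _)
  have hcen : xQ s = center (Iv s) := rfl
  rw [hcen] at hdist
  by_cases hst : s <:+ t
  · rcases suffix_cases hst with ht' | ⟨k, u, rfl⟩
    · exact Or.inl ht' 
    · have hmem' : ((xQ (u ++ k :: s) : ℚ) : ℝ) ∈ child (Iv s) k :=
        Iv_suffix_subset (⟨u, rfl⟩ : (k :: s) <:+ u ++ k :: s) (xQ_mem _)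
      have hfar := child_far hmem'
      have hkm : m ≤ k := by
        by_contra hc
        have : rad (Iv s) / 2 ^ (m + 2) < rad (Iv s) / 2 ^ (k + 2) := rad_div_lt _ (by omega)
        linarith
      exact Or.inr ⟨k, hkm, ⟨u, rfl⟩⟩
  · by_cases hts : t <:+ s
    · exfalso
      rcases suffix_cases hts with rfl | ⟨j, u, rfl⟩
      · exact hst List.suffix_rfl
      · have : ((xQ t : ℚ) : ℝ) ∈ Iv (j :: t) :=
          Iv_suffix_subset (⟨u, rfl⟩ : (j :: t) <:+ u ++ j :: t) hmem
        exact ((Iv_child_subset t j) this).2 rfl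
    · exact absurd (Set.disjoint_left.mp (Iv_disjoint s t hst hts) hmem (xQ_mem t)) (by simp)

lemma xQ_conv (s : List ℕ) : ∀ ε > 0, ∃ m, ∀ t ∈ Tail s m, dist (xQ t) (xQ s) < ε := by
  intro ε hε
  obtain ⟨j, hj⟩ := exists_rad_div_lt (Iv s) hε
  refine ⟨2 * j + 2, fun t ht => ?_⟩
  rcases ht with rfl | ⟨k, hk, u, rfl⟩
  · simpa using hε
  · have hcen : xQ s = center (Iv s) := rfl
    rw [hcen]
    have hmem' : ((xQ (u ++ k :: s) : ℚ) : ℝ) ∈ child (Iv s) k :=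
      Iv_suffix_subset (⟨u, rfl⟩ : (k :: s) <:+ u ++ k :: s) (xQ_mem _)
    have hclose := child_close (by omega : 2 ≤ k) hmem'
    have h2 : rad (Iv s) / 2 ^ (k / 2) ≤ rad (Iv s) / 2 ^ j := by
      rcases Nat.lt_or_ge j (k / 2) with h | h
      · exact le_of_lt (rad_div_lt _ h)
      · have : j = k / 2 := by omega
        rw [this]
    rw [← Rat.dist_cast]
    linarith

lemma xQ_inj : Function.Injective xQ := by
  intro t s he
  by_contra hne
  have hdist : dist (xQ t) (xQ s) = 0 := by rw [he, dist_self]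
  obtain ⟨ε, hε, hsep⟩ := xQ_sep s 0
  have ht0 : t ∈ Tail s 0 := hsep t (by rw [hdist]; exact hε)
  rcases ht0 with rfl | ⟨k, _, u, rfl⟩
  · exact hne rfl
  · obtain ⟨ε', hε', hsep'⟩ := xQ_sep s (k + 1)
    have ht1 : (u ++ k :: s) ∈ Tail s (k + 1) := hsep' _ (by rw [hdist]; exact hε')
    rcases ht1 with habs | ⟨k', hk', hsuf⟩
    · exact hne habs
    · have : k :: s = k' :: s :=
        suffix_eq_of_length (⟨u, rfl⟩ : (k :: s) <:+ u ++ k :: s) hsuf (by simp)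
      simp at this
      omega

lemma xQ_good : GoodScheme xQ :=
  ⟨xQ_inj, xQ_sep, xQ_conv⟩

lemma xQ_range : Set.range xQ = Set.univ := by
  rw [Set.eq_univ_iff_forall]
  intro q
  obtain ⟨t, ht⟩ := xQ_surj q
  exact ⟨t, ht⟩

/-- The range of the rational scheme is homeomorphic to `ℚ`. -/
def ratHomeo : ↥(Set.range xQ) ≃ₜ ℚ :=
  (Homeomorph.setCongr xQ_range).trans (Homeomorph.Set.univ ℚ)

end RatSide
section YSide

variable {α : Type*} [MetricSpace α]

structure YN (α : Type*) where
  pt : α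
  rad : ℝ
  pm : ℝ

variable (Y : Set α) (D : ℕ → Set α)

/-- Invariant for a node at level `n`. -/
def YGood (n : ℕ) (v : YN α) : Prop :=
  v.pt ∈ Y ∧ 0 < v.rad ∧ 0 < v.pm ∧ Metric.closedBall v.pt v.rad ∩ D n = ∅

/-- Property of a child node `w` of `v` (which sits at level `n`), with distance bound `b`. -/
def CP (n : ℕ) (v : YN α) (b : ℝ) (w : YN α) : Prop :=
  YGood Y D (n + 1) w ∧ 0 < dist w.pt v.pt ∧ dist w.pt v.pt ≤ b ∧
    w.rad ≤ dist w.pt v.pt / 8 ∧ w.pm = min (dist w.pt v.pt) (v.pm / 2)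

/-- Distance bound for the `k`-th child given the previous sibling `prev`. -/
noncomputable def bnd (v : YN α) (k : ℕ) (prev : YN α) : ℝ :=
  min (min (v.rad * (1 / 2) ^ k / 8) (v.pm / 8))
    (if 0 < dist prev.pt v.pt then dist prev.pt v.pt / 8 else 1)

lemma bnd_pos {v : YN α} (h1 : 0 < v.rad) (h2 : 0 < v.pm) (k : ℕ) (prev : YN α) :
    0 < bnd v k prev := by
  rw [bnd]
  apply lt_min (lt_min (by positivity) (by positivity))
  split_ifs with h
  · positivity
  · norm_num

open Classical in
noncomputable def chseq (n : ℕ) (v : YN α) : ℕ → YN α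
  | 0 => if h : ∃ w, CP Y D n v (bnd v 0 v) w then h.choose else v
  | (k + 1) =>
    if h : ∃ w, CP Y D n v (bnd v (k + 1) (chseq n v k)) w then h.choose else v

noncomputable def Ftree (root : YN α) : List ℕ → YN α
  | [] => root
  | k :: s => chseq Y D s.length (Ftree root s) k

variable {Y D}
variable (hYcl : IsClosed Y)
  (hnwd : ∀ n, ∀ O : Set α, IsOpen O → (O ∩ Y).Nonempty → ¬ (O ∩ Y ⊆ D n))
  (hcov : Y ⊆ ⋃ n, D n) (hDcl : ∀ n, IsClosed (D n))

include hnwd hcov in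
lemma no_isolated {y : α} (hy : y ∈ Y) {O : Set α} (hO : IsOpen O) (hyO : y ∈ O) :
    ∃ z, z ∈ O ∩ Y ∧ z ≠ y := by
  by_contra hcon
  push_neg at hcon
  obtain ⟨n, hn⟩ := Set.mem_iUnion.mp (hcov hy)
  apply hnwd n O hO ⟨y, hyO, hy⟩
  intro z hz
  rw [hcon z hz]
  exact hn

include hnwd hcov hDcl in
lemma exists_child (n : ℕ) (v : YN α) (hv : YGood Y D n v) {b : ℝ} (hb : 0 < b) :
    ∃ w, CP Y D n v b w := by
  -- pick a point of `Y` close to `v.pt`, distinct from it, outside `D (n+1)`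
  have hne : ((Metric.ball v.pt b ∩ {v.pt}ᶜ) ∩ Y).Nonempty := by
    obtain ⟨z, hz, hzne⟩ := no_isolated hnwd hcov hv.1 Metric.isOpen_ball
      (Metric.mem_ball_self hb)
    exact ⟨z, ⟨hz.1, hzne⟩, hz.2⟩
  have hstep := hnwd (n + 1) _ (Metric.isOpen_ball.inter (isOpen_compl_singleton)) hne
  rw [Set.not_subset] at hstep
  obtain ⟨z, ⟨⟨hzb, hzne⟩, hzY⟩, hzD⟩ := hstep
  have hdz : 0 < dist z v.pt := dist_pos.mpr hzne
  -- pick a radius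
  have hzD' : z ∈ (D (n + 1))ᶜ := hzD
  obtain ⟨ε, hε, hball⟩ := Metric.isOpen_iff.mp (hDcl (n + 1)).isOpen_compl z hzD'
  refine ⟨⟨z, min (dist z v.pt / 8) (ε / 2), min (dist z v.pt) (v.pm / 2)⟩,
    ⟨hzY, lt_min (by positivity) (by positivity), lt_min hdz (by linarith [hv.2.2.1]), ?_⟩,
    hdz, le_of_lt hzb, min_le_left _ _, rfl⟩
  rw [Set.eq_empty_iff_forall_notMem]
  rintro y ⟨hy1, hy2⟩
  have : y ∈ Metric.ball z ε := by
    rw [Metric.mem_closedBall] at hy1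
    rw [Metric.mem_ball]
    calc dist y z ≤ min (dist z v.pt / 8) (ε / 2) := hy1
      _ ≤ ε / 2 := min_le_right _ _
      _ < ε := by linarith
  exact (hball this) hy2

variable {root : YN α} (hroot : YGood Y D 0 root)

include hnwd hcov hDcl hroot in
lemma Ftree_good : ∀ s : List ℕ, YGood Y D s.length (Ftree Y D root s) := by
  intro s
  induction s with
  | nil => exact hroot
  | cons k s ih =>
    -- all children are good, by induction on k
    suffices h : ∀ k, YGood Y D (s.length + 1) (chseq Y D s.length (Ftree Y D root s) k) by
      exact h k
    intro k
    induction k with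
    | zero =>
      rw [chseq, dif_pos (exists_child hnwd hcov hDcl _ _ ih
        (bnd_pos ih.2.1 ih.2.2.1 0 (Ftree Y D root s)))]
      exact (Exists.choose_spec (p := CP Y D s.length (Ftree Y D root s) _) _).1
    | succ k ihk =>
      rw [chseq, dif_pos (exists_child hnwd hcov hDcl _ _ ih
        (bnd_pos ih.2.1 ih.2.2.1 (k+1) _))]
      exact (Exists.choose_spec (p := CP Y D s.length (Ftree Y D root s) _) _).1

include hnwd hcov hDcl hroot in
lemma Ftree_child_spec : ∀ (s : List ℕ) (k : ℕ),
    CP Y D s.length (Ftree Y D root s)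
      (bnd (Ftree Y D root s) k (Ftree Y D root (if k = 0 then s else (k-1) :: s)))
      (Ftree Y D root (k :: s)) := by
  intro s k
  have ih := Ftree_good hnwd hcov hDcl hroot s
  match k with
  | 0 =>
    show CP Y D s.length _ _ (chseq Y D s.length (Ftree Y D root s) 0)
    rw [chseq, dif_pos (exists_child hnwd hcov hDcl _ _ ih
      (bnd_pos ih.2.1 ih.2.2.1 0 _))]
    · simpa using Exists.choose_spec (p := CP Y D s.length (Ftree Y D root s) _) _
  | (k + 1) =>
    show CP Y D s.length _ _ (chseq Y D s.length (Ftree Y D root s) (k+1))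
    rw [chseq, dif_pos (exists_child hnwd hcov hDcl _ _ ih
      (bnd_pos ih.2.1 ih.2.2.1 (k+1) _))]
    · have hif : (if k + 1 = 0 then s else (k + 1 - 1) :: s) = k :: s := by simp
      rw [hif]; exact Exists.choose_spec _

end YSide

section YSide2

variable {α : Type*} [MetricSpace α] {Y : Set α} {D : ℕ → Set α}
variable (hnwd : ∀ n, ∀ O : Set α, IsOpen O → (O ∩ Y).Nonempty → ¬ (O ∩ Y ⊆ D n))
  (hcov : Y ⊆ ⋃ n, D n) (hDcl : ∀ n, IsClosed (D n))
variable {root : YN α} (hroot : YGood Y D 0 root)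

include hnwd hcov hDcl hroot

lemma d_pos (s : List ℕ) (k : ℕ) :
    0 < dist (Ftree Y D root (k :: s)).pt (Ftree Y D root s).pt :=
  (Ftree_child_spec hnwd hcov hDcl hroot s k).2.1

lemma d_le_rad (s : List ℕ) (k : ℕ) :
    dist (Ftree Y D root (k :: s)).pt (Ftree Y D root s).pt ≤
      (Ftree Y D root s).rad * (1 / 2) ^ k / 8 := by
  have h := (Ftree_child_spec hnwd hcov hDcl hroot s k).2.2.1
  exact le_trans h (le_trans (min_le_left _ _) (min_le_left _ _))

lemma d_le_pm (s : List ℕ) (k : ℕ) :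
    dist (Ftree Y D root (k :: s)).pt (Ftree Y D root s).pt ≤ (Ftree Y D root s).pm / 8 := by
  have h := (Ftree_child_spec hnwd hcov hDcl hroot s k).2.2.1
  exact le_trans h (le_trans (min_le_left _ _) (min_le_right _ _))

lemma rad_le_d (s : List ℕ) (k : ℕ) :
    (Ftree Y D root (k :: s)).rad ≤
      dist (Ftree Y D root (k :: s)).pt (Ftree Y D root s).pt / 8 :=
  (Ftree_child_spec hnwd hcov hDcl hroot s k).2.2.2.1

lemma pm_eq (s : List ℕ) (k : ℕ) :
    (Ftree Y D root (k :: s)).pm =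
      min (dist (Ftree Y D root (k :: s)).pt (Ftree Y D root s).pt)
        ((Ftree Y D root s).pm / 2) :=
  (Ftree_child_spec hnwd hcov hDcl hroot s k).2.2.2.2

lemma d_succ (s : List ℕ) (k : ℕ) :
    dist (Ftree Y D root ((k+1) :: s)).pt (Ftree Y D root s).pt ≤
      dist (Ftree Y D root (k :: s)).pt (Ftree Y D root s).pt / 8 := by
  have h := (Ftree_child_spec hnwd hcov hDcl hroot s (k+1)).2.2.1
  have hd := d_pos hnwd hcov hDcl hroot s k
  rw [bnd, if_neg (Nat.succ_ne_zero k), Nat.add_sub_cancel, if_pos hd] at h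
  exact le_trans h (min_le_right _ _)

lemma d_mono (s : List ℕ) {k k' : ℕ} (h : k ≤ k') :
    dist (Ftree Y D root (k' :: s)).pt (Ftree Y D root s).pt ≤
      dist (Ftree Y D root (k :: s)).pt (Ftree Y D root s).pt := by
  induction k' with
  | zero => have : k = 0 := by omega
            subst this; rfl
  | succ k' ih =>
    rcases Nat.lt_or_ge k (k'+1) with h2 | h2
    · have := d_succ hnwd hcov hDcl hroot s k'
      have h3 := ih (by omega)
      have h4 := d_pos hnwd hcov hDcl hroot s k'
      linarith
    · have : k = k' + 1 := by omega
      subst this; rfl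

lemma d_lt_mono (s : List ℕ) {k k' : ℕ} (h : k < k') :
    dist (Ftree Y D root (k' :: s)).pt (Ftree Y D root s).pt ≤
      dist (Ftree Y D root (k :: s)).pt (Ftree Y D root s).pt / 8 :=
  le_trans (d_mono hnwd hcov hDcl hroot s (show k + 1 ≤ k' by omega))
    (d_succ hnwd hcov hDcl hroot s k)

lemma subtree_dist (u : List ℕ) : ∀ s : List ℕ,
    dist (Ftree Y D root (u ++ s)).pt (Ftree Y D root s).pt ≤ (Ftree Y D root s).rad / 7 := by
  induction u using List.reverseRecOn with
  | nil =>
    intro s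
    simp only [List.nil_append, dist_self]
    have := (Ftree_good hnwd hcov hDcl hroot s).2.1
    positivity
  | append_singleton u a ih =>
    intro s
    have hassoc : (u ++ [a]) ++ s = u ++ (a :: s) := by simp
    rw [hassoc]
    have h1 := ih (a :: s)
    have h2 : dist (Ftree Y D root (u ++ (a :: s))).pt (Ftree Y D root s).pt ≤
        dist (Ftree Y D root (u ++ (a :: s))).pt (Ftree Y D root (a :: s)).pt +
        dist (Ftree Y D root (a :: s)).pt (Ftree Y D root s).pt := dist_triangle _ _ _
    have h3 := rad_le_d hnwd hcov hDcl hroot s a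
    have h4 := d_le_rad hnwd hcov hDcl hroot s a
    have h5 : (1 / 2 : ℝ) ^ a ≤ 1 := pow_le_one₀ (by norm_num) (by norm_num)
    have h6 := (Ftree_good hnwd hcov hDcl hroot s).2.1
    have h7 := d_pos hnwd hcov hDcl hroot s a
    nlinarith

lemma sep_suffix : ∀ s t : List ℕ, ¬ s <:+ t →
    (Ftree Y D root s).pm / 2 ≤ dist (Ftree Y D root t).pt (Ftree Y D root s).pt := by
  intro s
  induction s with
  | nil => intro t h; exact absurd List.nil_suffix h
  | cons i r ih =>
    intro t h1
    have hpmi := (Ftree_good hnwd hcov hDcl hroot (i :: r)).2.2.1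
    have hpml : (Ftree Y D root (i :: r)).pm ≤
        dist (Ftree Y D root (i :: r)).pt (Ftree Y D root r).pt := by
      rw [pm_eq hnwd hcov hDcl hroot r i]; exact min_le_left _ _
    have hpmr : (Ftree Y D root (i :: r)).pm ≤ (Ftree Y D root r).pm / 2 := by
      rw [pm_eq hnwd hcov hDcl hroot r i]; exact min_le_right _ _
    by_cases hrt : r <:+ t
    · rcases suffix_cases hrt with rfl | ⟨j, u, rfl⟩
      · rw [dist_comm]
        linarith
      · by_cases hji : j = i
        · subst hji; exact absurd ⟨u, rfl⟩ h1
        · set di := dist (Ftree Y D root (i :: r)).pt (Ftree Y D root r).pt with hdi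
          set dj := dist (Ftree Y D root (j :: r)).pt (Ftree Y D root r).pt with hdj
          have htri : dist (Ftree Y D root (u ++ j :: r)).pt (Ftree Y D root (i :: r)).pt ≥
              dist (Ftree Y D root (j :: r)).pt (Ftree Y D root (i :: r)).pt -
              dist (Ftree Y D root (u ++ j :: r)).pt (Ftree Y D root (j :: r)).pt := by
            have := dist_triangle (Ftree Y D root (j :: r)).pt
              (Ftree Y D root (u ++ j :: r)).pt (Ftree Y D root (i :: r)).pt
            rw [dist_comm (Ftree Y D root (j :: r)).pt (Ftree Y D root (u ++ j :: r)).pt] at this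
            linarith
          have hsub : dist (Ftree Y D root (u ++ j :: r)).pt (Ftree Y D root (j :: r)).pt ≤
              (Ftree Y D root (j :: r)).rad / 7 := subtree_dist hnwd hcov hDcl hroot u (j :: r)
          have hradj : (Ftree Y D root (j :: r)).rad ≤ dj / 8 := rad_le_d hnwd hcov hDcl hroot r j
          have habs1 : dist (Ftree Y D root (j :: r)).pt (Ftree Y D root (i :: r)).pt ≥ dj - di := by
            have := abs_dist_sub_le (Ftree Y D root (j :: r)).pt (Ftree Y D root (i :: r)).pt
              (Ftree Y D root r).pt
            rw [abs_le] at this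
            linarith [this.2]
          have habs2 : dist (Ftree Y D root (j :: r)).pt (Ftree Y D root (i :: r)).pt ≥ di - dj := by
            have := abs_dist_sub_le (Ftree Y D root (j :: r)).pt (Ftree Y D root (i :: r)).pt
              (Ftree Y D root r).pt
            rw [abs_le] at this
            linarith [this.1]
          have hdjpos := d_pos hnwd hcov hDcl hroot r j
          have hdipos := d_pos hnwd hcov hDcl hroot r i
          rcases Nat.lt_or_ge i j with hij | hij
          · have hmono : dj ≤ di / 8 := d_lt_mono hnwd hcov hDcl hroot r hij
            linarith
          · have hij' : j < i := by omega
            have hmono : di ≤ dj / 8 := d_lt_mono hnwd hcov hDcl hroot r hij'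
            linarith
    · have hd := ih t hrt
      have htri : dist (Ftree Y D root t).pt (Ftree Y D root (i :: r)).pt ≥
          dist (Ftree Y D root t).pt (Ftree Y D root r).pt -
          dist (Ftree Y D root (i :: r)).pt (Ftree Y D root r).pt := by
        have := dist_triangle (Ftree Y D root t).pt (Ftree Y D root (i :: r)).pt
          (Ftree Y D root r).pt
        linarith
      have hle := d_le_pm hnwd hcov hDcl hroot r i
      have hpmrpos := (Ftree_good hnwd hcov hDcl hroot r).2.2.1
      linarith

lemma Ftree_sep (s : List ℕ) (m : ℕ) :
    ∃ ε > 0, ∀ t, dist (Ftree Y D root t).pt (Ftree Y D root s).pt < ε → t ∈ Tail s m := by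
  classical
  have hpm := (Ftree_good hnwd hcov hDcl hroot s).2.2.1
  refine ⟨min ((Ftree Y D root s).pm / 2)
    (if h : m = 0 then 1 else
      (3 / 4) * dist (Ftree Y D root ((m-1) :: s)).pt (Ftree Y D root s).pt), ?_, ?_⟩
  · apply lt_min (by positivity)
    split_ifs with h
    · norm_num
    · have := d_pos hnwd hcov hDcl hroot s (m-1)
      positivity
  · intro t ht
    by_cases hst : s <:+ t
    · rcases suffix_cases hst with ht' | ⟨k, u, rfl⟩
      · exact Or.inl ht'
      · rcases Nat.lt_or_ge k m with hkm | hkm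
        · exfalso
          have hm0 : m ≠ 0 := by omega
          rw [dif_neg hm0] at ht
          have h1 : dist (Ftree Y D root (u ++ k :: s)).pt (Ftree Y D root (k :: s)).pt ≤
              (Ftree Y D root (k :: s)).rad / 7 := subtree_dist hnwd hcov hDcl hroot u (k :: s)
          have h2 := rad_le_d hnwd hcov hDcl hroot s k
          have h3 : dist (Ftree Y D root (u ++ k :: s)).pt (Ftree Y D root s).pt ≥
              dist (Ftree Y D root (k :: s)).pt (Ftree Y D root s).pt -
              dist (Ftree Y D root (u ++ k :: s)).pt (Ftree Y D root (k :: s)).pt := by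
            have := dist_triangle (Ftree Y D root (k :: s)).pt
              (Ftree Y D root (u ++ k :: s)).pt (Ftree Y D root s).pt
            rw [dist_comm (Ftree Y D root (k :: s)).pt (Ftree Y D root (u ++ k :: s)).pt] at this
            linarith
          have h4 : dist (Ftree Y D root ((m-1) :: s)).pt (Ftree Y D root s).pt ≤
              dist (Ftree Y D root (k :: s)).pt (Ftree Y D root s).pt :=
            d_mono hnwd hcov hDcl hroot s (by omega)
          have h5 := d_pos hnwd hcov hDcl hroot s k
          have h6 := lt_of_lt_of_le ht (min_le_right _ _)
          linarith
        · exact Or.inr ⟨k, hkm, ⟨u, rfl⟩⟩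
    · exfalso
      have := sep_suffix hnwd hcov hDcl hroot s t hst
      have h6 := lt_of_lt_of_le ht (min_le_left _ _)
      linarith

lemma Ftree_conv (s : List ℕ) : ∀ ε > 0, ∃ m, ∀ t ∈ Tail s m,
    dist (Ftree Y D root t).pt (Ftree Y D root s).pt < ε := by
  intro ε hε
  have hrad := (Ftree_good hnwd hcov hDcl hroot s).2.1
  obtain ⟨m, hm⟩ := exists_pow_lt_of_lt_one (div_pos hε hrad) (show (1:ℝ)/2 < 1 by norm_num)
  have hm' : (Ftree Y D root s).rad * (1/2) ^ m < ε := by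
    rw [lt_div_iff₀ hrad] at hm
    linarith [hm]
  refine ⟨m, fun t ht => ?_⟩
  rcases ht with rfl | ⟨k, hk, u, rfl⟩
  · simpa using hε
  · have h1 : dist (Ftree Y D root (u ++ k :: s)).pt (Ftree Y D root (k :: s)).pt ≤
        (Ftree Y D root (k :: s)).rad / 7 := subtree_dist hnwd hcov hDcl hroot u (k :: s)
    have h2 := rad_le_d hnwd hcov hDcl hroot s k
    have h3 := d_le_rad hnwd hcov hDcl hroot s k
    have h4 := dist_triangle (Ftree Y D root (u ++ k :: s)).pt
      (Ftree Y D root (k :: s)).pt (Ftree Y D root s).pt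
    have h5 : (1/2:ℝ) ^ k ≤ (1/2) ^ m :=
      pow_le_pow_of_le_one (by norm_num) (by norm_num) hk
    have h6 : (0:ℝ) < (1/2) ^ m := by positivity
    nlinarith

lemma Ftree_inj : Function.Injective (fun s => (Ftree Y D root s).pt) := by
  intro t s he
  simp only at he
  by_contra hne
  have hdist : dist (Ftree Y D root t).pt (Ftree Y D root s).pt = 0 := by rw [he, dist_self]
  obtain ⟨ε, hε, hsep⟩ := Ftree_sep hnwd hcov hDcl hroot s 0
  have ht0 : t ∈ Tail s 0 := hsep t (by rw [hdist]; exact hε)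
  rcases ht0 with rfl | ⟨k, _, u, rfl⟩
  · exact hne rfl
  · obtain ⟨ε', hε', hsep'⟩ := Ftree_sep hnwd hcov hDcl hroot s (k + 1)
    have ht1 : (u ++ k :: s) ∈ Tail s (k + 1) := hsep' _ (by rw [hdist]; exact hε')
    rcases ht1 with habs | ⟨k', hk', hsuf⟩
    · exact hne habs
    · have : k :: s = k' :: s :=
        suffix_eq_of_length (⟨u, rfl⟩ : (k :: s) <:+ u ++ k :: s) hsuf (by simp)
      simp at this
      omega

end YSide2

section YSide3

variable {α : Type*} [MetricSpace α] {Y : Set α} {D : ℕ → Set α}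
variable (hnwd : ∀ n, ∀ O : Set α, IsOpen O → (O ∩ Y).Nonempty → ¬ (O ∩ Y ⊆ D n))
  (hcov : Y ⊆ ⋃ n, D n) (hDcl : ∀ n, IsClosed (D n))
variable {root : YN α} (hroot : YGood Y D 0 root)

/-- The image of the subtree rooted at `s`. -/
def SubT (Y : Set α) (D : ℕ → Set α) (root : YN α) (s : List ℕ) : Set α :=
  (fun t => (Ftree Y D root t).pt) '' {t | s <:+ t}

include hnwd hcov hDcl hroot

lemma SubT_subset_ball (s : List ℕ) :
    SubT Y D root s ⊆ Metric.closedBall (Ftree Y D root s).pt ((Ftree Y D root s).rad / 7) := by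
  rintro x ⟨t, ⟨u, rfl⟩, rfl⟩
  exact subtree_dist hnwd hcov hDcl hroot u s

lemma SubT_step {b : α} (hbr : b ∉ Set.range fun s => (Ftree Y D root s).pt) :
    ∀ s : List ℕ, b ∈ closure (SubT Y D root s) → ∃ k, b ∈ closure (SubT Y D root (k :: s)) := by
  intro s hb
  have hbs : b ≠ (Ftree Y D root s).pt := fun he => hbr ⟨s, he.symm⟩
  set δ := dist b (Ftree Y D root s).pt with hδdef
  have hδ : 0 < δ := dist_pos.mpr hbs
  have hrad := (Ftree_good hnwd hcov hDcl hroot s).2.1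
  obtain ⟨K, hK⟩ := exists_pow_lt_of_lt_one (div_pos hδ hrad) (show (1:ℝ)/2 < 1 by norm_num)
  have hK' : (Ftree Y D root s).rad * (1/2) ^ K < δ := by
    rw [lt_div_iff₀ hrad] at hK
    linarith
  -- cover of the subtree
  have hcover : SubT Y D root s ⊆
      (⋃ k ∈ Finset.range K, SubT Y D root (k :: s)) ∪ Metric.closedBall (Ftree Y D root s).pt (δ / 2) := by
    rintro x ⟨t, hts, rfl⟩
    rcases suffix_cases hts with rfl | ⟨k, u, rfl⟩
    · right
      simp only [Metric.mem_closedBall, dist_self]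
      positivity
    · rcases Nat.lt_or_ge k K with hk | hk
      · left
        exact Set.mem_biUnion (Finset.mem_range.mpr hk) ⟨u ++ k :: s, ⟨u, rfl⟩, rfl⟩
      · right
        have h1 : dist (Ftree Y D root (u ++ k :: s)).pt (Ftree Y D root (k :: s)).pt ≤
            (Ftree Y D root (k :: s)).rad / 7 := subtree_dist hnwd hcov hDcl hroot u (k :: s)
        have h2 := rad_le_d hnwd hcov hDcl hroot s k
        have h3 := d_le_rad hnwd hcov hDcl hroot s k
        have h4 := dist_triangle (Ftree Y D root (u ++ k :: s)).pt
          (Ftree Y D root (k :: s)).pt (Ftree Y D root s).pt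
        have h5 : (1/2:ℝ) ^ k ≤ (1/2) ^ K :=
          pow_le_pow_of_le_one (by norm_num) (by norm_num) hk
        have h6 : (0:ℝ) < (1/2) ^ K := by positivity
        simp only [Metric.mem_closedBall]
        nlinarith
  have hb2 : b ∈ closure ((⋃ k ∈ Finset.range K, SubT Y D root (k :: s)) ∪
      Metric.closedBall (Ftree Y D root s).pt (δ / 2)) :=
    closure_mono hcover hb
  rw [closure_union] at hb2
  rcases hb2 with hb2 | hb2
  · rw [Finset.closure_biUnion] at hb2
    simp only [Set.mem_iUnion] at hb2
    obtain ⟨k, _, hk⟩ := hb2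
    exact ⟨k, hk⟩
  · exfalso
    rw [IsClosed.closure_eq isClosed_closedBall, Metric.mem_closedBall] at hb2
    linarith

lemma Ftree_range_closed (hYcl : IsClosed Y) :
    IsClosed (Set.range fun s => (Ftree Y D root s).pt) := by
  apply isClosed_of_closure_subset
  intro b hb
  by_contra hbr
  have hb0 : b ∈ closure (SubT Y D root []) := by
    have : SubT Y D root [] = Set.range fun s => (Ftree Y D root s).pt := by
      rw [SubT]
      have : {t : List ℕ | [] <:+ t} = Set.univ := by
        ext t; simp [List.nil_suffix]
      rw [this, Set.image_univ]
    rwa [this]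
  have hlevel : ∀ n, ∃ s : List ℕ, s.length = n ∧ b ∈ closure (SubT Y D root s) := by
    intro n
    induction n with
    | zero => exact ⟨[], rfl, hb0⟩
    | succ n ih =>
      obtain ⟨s, hlen, hbs⟩ := ih
      obtain ⟨k, hk⟩ := SubT_step hnwd hcov hDcl hroot hbr s hbs
      exact ⟨k :: s, by simp [hlen], hk⟩
  have hnotD : ∀ n, b ∉ D n := by
    intro n hbn
    obtain ⟨s, hlen, hbs⟩ := hlevel n
    have hgood := Ftree_good hnwd hcov hDcl hroot s
    have h1 : closure (SubT Y D root s) ⊆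
        Metric.closedBall (Ftree Y D root s).pt (Ftree Y D root s).rad := by
      refine closure_minimal (subset_trans (SubT_subset_ball hnwd hcov hDcl hroot s) ?_)
        isClosed_closedBall
      apply Metric.closedBall_subset_closedBall
      linarith [hgood.2.1]
    have hbin : b ∈ Metric.closedBall (Ftree Y D root s).pt (Ftree Y D root s).rad := h1 hbs
    have := hgood.2.2.2
    rw [Set.eq_empty_iff_forall_notMem] at this
    exact this b ⟨hbin, by rw [hlen]; exact hbn⟩
  have hbY : b ∈ Y := by
    have hsub : Set.range (fun s => (Ftree Y D root s).pt) ⊆ Y := by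
      rintro x ⟨s, rfl⟩
      exact (Ftree_good hnwd hcov hDcl hroot s).1
    exact hYcl.closure_subset ((closure_mono hsub) hb)
  obtain ⟨n, hn⟩ := Set.mem_iUnion.mp (hcov hbY)
  exact hnotD n hn

end YSide3

/-- Master lemma: a closed set `Y` covered by closed relatively-nowhere-dense sets `D n`
contains a closed copy of the range of a good scheme. -/
lemma exists_closed_good_scheme {α : Type*} [MetricSpace α] {Y : Set α} {D : ℕ → Set α}
    (hYcl : IsClosed Y)
    (hnwd : ∀ n, ∀ O : Set α, IsOpen O → (O ∩ Y).Nonempty → ¬ (O ∩ Y ⊆ D n))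
    (hcov : Y ⊆ ⋃ n, D n) (hDcl : ∀ n, IsClosed (D n))
    (hYne : (Y \ D 0).Nonempty) :
    ∃ x : List ℕ → α, GoodScheme x ∧ Set.range x ⊆ Y ∧ IsClosed (Set.range x) := by
  obtain ⟨y0, hy0Y, hy0D⟩ := hYne
  obtain ⟨ε, hε, hball⟩ := Metric.isOpen_iff.mp (hDcl 0).isOpen_compl y0 hy0D
  set root : YN α := ⟨y0, ε / 2, ε / 2⟩ with hrootdef
  have hroot : YGood Y D 0 root := by
    refine ⟨hy0Y, by positivity, by positivity, ?_⟩
    rw [Set.eq_empty_iff_forall_notMem]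
    rintro z ⟨hz1, hz2⟩
    refine hball ?_ hz2
    rw [Metric.mem_closedBall] at hz1
    have hz1' : dist z y0 ≤ ε / 2 := hz1
    rw [Metric.mem_ball]
    linarith
  refine ⟨fun s => (Ftree Y D root s).pt,
    ⟨Ftree_inj hnwd hcov hDcl hroot, Ftree_sep hnwd hcov hDcl hroot,
      Ftree_conv hnwd hcov hDcl hroot⟩, ?_, Ftree_range_closed hnwd hcov hDcl hroot hYcl⟩
  rintro x ⟨s, rfl⟩
  exact (Ftree_good hnwd hcov hDcl hroot s).1

section Assembly

/-- Baire property transfers along homeomorphisms. -/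
lemma baire_of_homeo {X Y : Type*} [TopologicalSpace X] [TopologicalSpace Y]
    (e : X ≃ₜ Y) [hX : BaireSpace X] : BaireSpace Y := by
  constructor
  intro f hfo hfd
  have hgo : ∀ n, IsOpen (e ⁻¹' f n) := fun n => (hfo n).preimage e.continuous
  have hgd : ∀ n, Dense (e ⁻¹' f n) := by
    intro n
    rw [dense_iff_closure_eq, ← Homeomorph.preimage_closure, (hfd n).closure_eq,
      Set.preimage_univ]
  have hd := hX.baire_property _ hgo hgd
  rw [dense_iff_closure_eq] at hd ⊢
  have hpre : e ⁻¹' (⋂ n, f n) = ⋂ n, e ⁻¹' f n := Set.preimage_iInter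
  rw [← hpre, ← Homeomorph.preimage_closure] at hd
  have := congrArg (fun s => e '' s) hd
  simpa [Set.image_preimage_eq _ e.surjective, Set.image_univ, e.surjective.range_eq] using this

lemma rat_not_baire : ¬ BaireSpace ℚ := by
  intro hB
  have hopen : ∀ n, IsOpen ({renum n}ᶜ : Set ℚ) := fun n => isOpen_compl_singleton
  have hdense : ∀ n, Dense ({renum n}ᶜ : Set ℚ) := by
    intro n
    rw [Metric.dense_iff]
    intro x r hr
    obtain ⟨q, hq0, hqr⟩ := exists_rat_btwn (show (0:ℝ) < r from hr)
    by_cases hx : x = renum n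
    · refine ⟨x + q, ?_, ?_⟩
      · rw [Metric.mem_ball]
        have hdq : dist (x + q) x = |(q:ℝ)| := by
          rw [Rat.dist_eq]
          push_cast
          ring_nf
        rw [hdq, abs_of_pos hq0]
        exact hqr
      · simp only [Set.mem_compl_iff, Set.mem_singleton_iff]
        intro he
        rw [← hx] at he
        have hq' : q = 0 := by linarith
        rw [hq'] at hq0
        norm_num at hq0
    · exact ⟨x, Metric.mem_ball_self hr, hx⟩
  have hd := hB.baire_property _ hopen hdense
  obtain ⟨q, hq⟩ := hd.nonempty
  rw [Set.mem_iInter] at hq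
  obtain ⟨n, hn⟩ := renum_surj q
  exact (hq n) hn.symm

end Assembly

end HurewiczAux

open HurewiczAux in
theorem completelyBaire_iff_no_closed_rationals (B : Type*) [TopologicalSpace B]
    [TopologicalSpace.SeparableSpace B] [TopologicalSpace.MetrizableSpace B] :
    (∀ F : Set B, IsClosed F → BaireSpace ↥F) ↔
      ¬ ∃ F : Set B, IsClosed F ∧ Nonempty (↥F ≃ₜ ℚ) := by
  constructor
  · rintro h ⟨F, hFcl, ⟨e⟩⟩
    haveI := h F hFcl
    exact rat_not_baire (baire_of_homeo e)
  · intro hno F hFcl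
    letI : MetricSpace B := TopologicalSpace.metrizableSpaceMetric B
    by_contra hnB
    have hnB' : ¬ ∀ f : ℕ → Set ↥F, (∀ n, IsOpen (f n)) → (∀ n, Dense (f n)) →
        Dense (⋂ n, f n) := fun hh => hnB ⟨hh⟩
    push_neg at hnB'
    obtain ⟨f, hfo, hfd, hnd⟩ := hnB'
    have hOex : ∀ n, ∃ Og : Set B, IsOpen Og ∧ Subtype.val ⁻¹' Og = f n := by
      intro n
      exact isOpen_induced_iff.mp (hfo n)
    choose O hOo hOpre using hOex
    have hdense' : ∀ n, ∀ U : Set B, IsOpen U → (U ∩ F).Nonempty →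
        (U ∩ (O n ∩ F)).Nonempty := by
      rintro n U hU ⟨b, hbU, hbF⟩
      have hp : (⟨b, hbF⟩ : ↥F) ∈ closure (f n) := (hfd n) _
      rw [_root_.mem_closure_iff] at hp
      obtain ⟨q, hqV, hqf⟩ := hp (Subtype.val ⁻¹' U)
        (hU.preimage continuous_subtype_val) hbU
      refine ⟨q.val, hqV, ?_, q.2⟩
      rw [← hOpre n] at hqf
      exact hqf
    -- a relatively open set avoiding the intersection
    have hnd' : ∃ p : ↥F, p ∉ closure (⋂ n, f n) := by
      by_contra hc
      push_neg at hc
      exact hnd fun x => hc x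
    obtain ⟨p, hp⟩ := hnd'
    rw [_root_.mem_closure_iff] at hp
    push_neg at hp
    obtain ⟨o, hoo, hpo, hoint⟩ := hp
    obtain ⟨OV, hOVo, hOVpre⟩ := isOpen_induced_iff.mp hoo
    set Y : Set B := closure (OV ∩ F) with hYdef
    have hYF : Y ⊆ F := by
      have h := closure_mono (Set.inter_subset_right : OV ∩ F ⊆ F)
      rwa [hFcl.closure_eq] at h
    have hYcl : IsClosed Y := isClosed_closure
    set D : ℕ → Set B := fun n => Nat.casesOn n (Y ∩ OVᶜ) (fun m => Y ∩ (O m)ᶜ) with hDdef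
    have hDcl : ∀ n, IsClosed (D n) := by
      intro n
      cases n with
      | zero => exact hYcl.inter (isClosed_compl_iff.mpr hOVo)
      | succ m => exact hYcl.inter (isClosed_compl_iff.mpr (hOo m))
    have hpOV : (p : B) ∈ OV := by
      rw [← hOVpre] at hpo
      exact hpo
    have hcov : Y ⊆ ⋃ n, D n := by
      intro y hy
      by_cases hyOV : y ∈ OV
      · have hyF : y ∈ F := hYF hy
        have : ∃ n, y ∉ O n := by
          by_contra hc
          push_neg at hc
          have hyf : (⟨y, hyF⟩ : ↥F) ∈ ⋂ n, f n := by
            rw [Set.mem_iInter]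
            intro n
            rw [← hOpre n]
            exact hc n
          have hyo : (⟨y, hyF⟩ : ↥F) ∈ o := by
            rw [← hOVpre]
            exact hyOV
          rw [Set.eq_empty_iff_forall_notMem] at hoint
          exact hoint _ ⟨hyo, hyf⟩
        obtain ⟨n, hn⟩ := this
        exact Set.mem_iUnion.mpr ⟨n + 1, hy, hn⟩
      · exact Set.mem_iUnion.mpr ⟨0, hy, hyOV⟩
    -- meeting the generating open set
    have hmeet : ∀ U : Set B, IsOpen U → (U ∩ Y).Nonempty → (U ∩ (OV ∩ F)).Nonempty := by
      rintro U hU ⟨z, hzU, hzY⟩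
      have := hzY
      rw [hYdef, _root_.mem_closure_iff] at this
      exact this U hU hzU
    have hnwd : ∀ n, ∀ U : Set B, IsOpen U → (U ∩ Y).Nonempty → ¬ (U ∩ Y ⊆ D n) := by
      intro n U hU hne hsub
      cases n with
      | zero =>
        obtain ⟨w, hwU, hwOV, hwF⟩ := hmeet U hU hne
        have hwY : w ∈ Y := subset_closure ⟨hwOV, hwF⟩
        exact (hsub ⟨hwU, hwY⟩).2 hwOV
      | succ m =>
        obtain ⟨w, hwU, hwOV, hwF⟩ := hmeet U hU hne
        obtain ⟨w', ⟨hw'U, hw'OV⟩, hw'On, hw'F⟩ :=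
          hdense' m (U ∩ OV) (hU.inter hOVo) ⟨w, ⟨hwU, hwOV⟩, hwF⟩
        have hw'Y : w' ∈ Y := subset_closure ⟨hw'OV, hw'F⟩
        exact (hsub ⟨hw'U, hw'Y⟩).2 hw'On
    have hYne : (Y \ D 0).Nonempty := by
      refine ⟨p.val, subset_closure ⟨hpOV, p.2⟩, ?_⟩
      intro hmem
      exact hmem.2 hpOV
    obtain ⟨x, hxgood, hxY, hxcl⟩ := exists_closed_good_scheme hYcl hnwd hcov hDcl hYne
    have e2 : ↥(Set.range x) ≃ₜ ↥(Set.range xQ) := hxgood.homeomorph xQ_good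
    exact hno ⟨Set.range x, hxcl, ⟨e2.trans ratHomeo⟩⟩
end

section
/- Suppose every non-σ-compact co-analytic subset of ℝ contains a compact set K such that K minus the co-analytic set is a countable dense subset of K homeomorphic to ℚ. Then every analytic completely Baire subset of ℝ is Gδ in ℝ. -/
lemma not_baireSpace_rat : ¬ BaireSpace ℚ := by
  intro h
  have hd : Dense (⋂ q : ℚ, ({q}ᶜ : Set ℚ)) :=
    dense_iInter_of_isOpen (fun q => isOpen_compl_singleton)
      (fun q => dense_compl_singleton q)
  have : (⋂ q : ℚ, ({q}ᶜ : Set ℚ)) = ∅ := by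
    ext x; simp
  rw [this] at hd
  simpa using hd.nonempty

lemma baireSpace_of_homeo {X Y : Type*} [TopologicalSpace X] [TopologicalSpace Y]
    [BaireSpace X] (e : X ≃ₜ Y) : BaireSpace Y := by
  constructor
  intro f ho hd
  have h1 : Dense (⋂ n, e ⁻¹' f n) :=
    dense_iInter_of_isOpen_nat (fun n => (ho n).preimage e.continuous)
      (fun n => (hd n).preimage e.isOpenMap)
  rw [← Set.preimage_iInter] at h1
  have h2 := h1.preimage e.symm.isOpenMap
  simpa [Set.preimage_preimage] using h2

lemma not_baireSpace_of_homeo_rat {X : Type*} [TopologicalSpace X]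
    (e : X ≃ₜ ℚ) : ¬ BaireSpace X := fun _ =>
  not_baireSpace_rat (baireSpace_of_homeo e)

theorem coanalytic_HD_implies_analytic_completelyBaire_gdelta
    (hHD : ∀ C : Set ℝ, MeasureTheory.AnalyticSet Cᶜ → ¬ IsSigmaCompact C →
      ∃ K : Set ℝ, IsCompact K ∧ (K \ C).Countable ∧ K ⊆ closure (K \ C) ∧
        Nonempty (↥(K \ C) ≃ₜ ℚ)) :
    ∀ A : Set ℝ, MeasureTheory.AnalyticSet A →
      (∀ F : Set ↥A, IsClosed F → BaireSpace ↥F) → IsGδ A := by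
  intro A hA hCB
  by_cases hσ : IsSigmaCompact Aᶜ
  · -- Aᶜ σ-compact ⇒ Aᶜ is Fσ ⇒ A is Gδ
    obtain ⟨K, hKc, hKU⟩ := hσ
    have : A = ⋂ n, (K n)ᶜ := by
      rw [← Set.compl_iUnion, hKU, compl_compl]
    rw [this]
    exact .iInter fun n => ((hKc n).isClosed.isOpen_compl).isGδ
  · exfalso
    obtain ⟨K, hK, hcnt, hdense, ⟨e⟩⟩ := hHD Aᶜ (by simpa using hA) hσ
    set Q : Set ℝ := K \ Aᶜ with hQ
    have hQA : Q ⊆ A := fun x hx => by simpa using hx.2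
    -- Q as a subset of A
    set F : Set ↥A := Subtype.val ⁻¹' K with hF
    have hFclosed : IsClosed F := hK.isClosed.preimage continuous_subtype_val
    have hBaire := hCB F hFclosed
    -- ↥F ≃ₜ ↥Q
    have hrange : Set.range ((fun x : ↥F => (x.1.1 : ℝ))) = Q := by
      ext x
      constructor
      · rintro ⟨⟨⟨y, hyA⟩, hyK⟩, rfl⟩
        exact ⟨hyK, by simpa using hyA⟩
      · rintro ⟨hxK, hxA⟩
        exact ⟨⟨⟨x, by simpa using hxA⟩, hxK⟩, rfl⟩
    have hemb : Topology.IsEmbedding (fun x : ↥F => (x.1.1 : ℝ)) :=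
      Topology.IsEmbedding.subtypeVal.comp Topology.IsEmbedding.subtypeVal
    have e2 : ↥F ≃ₜ ↥Q :=
      (Topology.IsEmbedding.toHomeomorph hemb).trans (Homeomorph.setCongr hrange)
    exact not_baireSpace_of_homeo_rat (e2.trans e) hBaire
end

section
/- If S is a subset of ℕ^ℕ that is ω₁-concentrated on a countable set Q ⊆ ℕ^ℕ in the following sense — S has cardinality ℵ₁ and for every open set U ⊇ Q the complement S \ U has cardinality less than ℵ₁ (i.e., is countable) — and every countable subset of ℕ^ℕ is Menger, then S ∪ Q is Menger. -/
theorem concentrated_union_menger (S Q : Set (ℕ → ℕ)) (hQ : Q.Countable)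
    (hcard : Cardinal.mk ↥S = Cardinal.aleph 1)
    (hconc : ∀ U : Set (ℕ → ℕ), IsOpen U → Q ⊆ U → (S \ U).Countable)
    (hctbl : ∀ C : Set (ℕ → ℕ), C.Countable → MengerSet C) :
    MengerSet (S ∪ Q) := by
  intro U hUopen hUcov
  -- Cover Q using even-indexed covers
  obtain ⟨V1, hV1sub, hV1cov⟩ := hctbl Q hQ (fun n => U (2 * n))
    (fun n s hs => hUopen (2 * n) s hs)
    (fun n x hx => hUcov (2 * n) (Or.inr hx))
  set W : Set (ℕ → ℕ) := ⋃ n, ⋃₀ ((V1 n : Set (Set (ℕ → ℕ)))) with hW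
  have hWopen : IsOpen W := by
    apply isOpen_iUnion; intro n
    exact isOpen_sUnion (fun s hs => hUopen (2 * n) s (hV1sub n hs))
  have hSW : (S \ W).Countable := hconc W hWopen hV1cov
  -- Cover S \ W using odd-indexed covers
  obtain ⟨V2, hV2sub, hV2cov⟩ := hctbl (S \ W) hSW (fun n => U (2 * n + 1))
    (fun n s hs => hUopen (2 * n + 1) s hs)
    (fun n x hx => hUcov (2 * n + 1) (Or.inl hx.1))
  refine ⟨fun n => if Even n then V1 (n / 2) else V2 (n / 2), ?_, ?_⟩
  · intro n
    by_cases h : Even n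
    · simp only [h, if_true]
      obtain ⟨k, hk⟩ := h
      have : n / 2 = k := by omega
      rw [this]
      have : 2 * k = n := by omega
      rw [← this] at *
      exact hV1sub k
    · simp only [h, if_false]
      obtain ⟨k, hk⟩ := Nat.odd_iff.mpr (Nat.not_even_iff.mp h)
      have h2 : n / 2 = k := by omega
      rw [h2]
      have h3 : 2 * k + 1 = n := by omega
      rw [← h3]
      exact hV2sub k
  · intro x hx
    by_cases hxW : x ∈ W
    · obtain ⟨t, ⟨m, rfl⟩, hxt⟩ := hxW
      refine Set.mem_iUnion.mpr ⟨2 * m, ?_⟩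
      have he : Even (2 * m) := ⟨m, by omega⟩
      simp only [he, if_true]
      have : 2 * m / 2 = m := by omega
      rw [this]
      exact hxt
    · have hxS : x ∈ S \ W := by
        cases hx with
        | inl h => exact ⟨h, hxW⟩
        | inr h => exact absurd (hV1cov h) hxW
      obtain ⟨t, ⟨m, rfl⟩, hxt⟩ := hV2cov hxS
      refine Set.mem_iUnion.mpr ⟨2 * m + 1, ?_⟩
      have ho : ¬ Even (2 * m + 1) := by simp [Nat.even_add_one, parity_simps]
      simp only [ho, if_false]
      have : (2 * m + 1) / 2 = m := by omega
      rw [this]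
      exact hxt
end
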